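/- Let a, b, c be three affinely independent points of the Euclidean plane and let T = convexHull ℝ {a,b,c} be the triangle they span. If v lies in the interior of T and w does not lie in T, then the closed segment [v,w] meets the frontier of T in exactly one point: there exists a unique z with z ∈ [v,w] and z ∈ frontier T. -/

import Mathlib

open Set

/-- If `a, b, c` are affinely independent points of the Euclidean plane spanning the
triangle `T = convexHull ℝ {a,b,c}`, `v` lies in the interior of `T` and `w` lies outside
`T`, then the closed segment `[v,w]` meets the frontier of `T` in exactly one point. -/
theorem segment_frontier_unique_of_interior_outside
    (a b c v w : EuclideanSpace ℝ (Fin 2)) (h : AffineIndependent ℝ ![a, b, c])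
    (hv : v ∈ interior (convexHull ℝ ({a, b, c} : Set (EuclideanSpace ℝ (Fin 2)))))
    (hw : w ∉ convexHull ℝ ({a, b, c} : Set (EuclideanSpace ℝ (Fin 2)))) :
    ∃! z : EuclideanSpace ℝ (Fin 2), z ∈ segment ℝ v w ∧
      z ∈ frontier (convexHull ℝ ({a, b, c} : Set (EuclideanSpace ℝ (Fin 2)))) := by
  set T : Set (EuclideanSpace ℝ (Fin 2)) := convexHull ℝ ({a, b, c}) with hT
  have hTconv : Convex ℝ T := convex_convexHull ℝ _
  have hTclosed : IsClosed T := by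
    exact ((Set.toFinite _).isCompact_convexHull (𝕜 := ℝ)).isClosed
  -- any point of the segment on the frontier is uniquely determined
  have key : ∀ z₁ z₂ : EuclideanSpace ℝ (Fin 2),
      z₁ ∈ segment ℝ v w → z₁ ∈ frontier T →
      z₂ ∈ segment ℝ v w → z₂ ∈ frontier T → z₁ = z₂ := by
    have main : ∀ z₁ z₂ : EuclideanSpace ℝ (Fin 2), ∀ t₁ t₂ : ℝ,
        0 ≤ t₁ → 0 ≤ t₂ → t₁ < t₂ →
        z₁ = (1 - t₁) • v + t₁ • w → z₂ = (1 - t₂) • v + t₂ • w →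
        z₁ ∈ frontier T → z₂ ∈ frontier T → False := by
      intro z₁ z₂ t₁ t₂ ht₁ ht₂ hlt hz₁ hz₂ hf₁ hf₂
      have ht₂pos : 0 < t₂ := lt_of_le_of_lt ht₁ hlt
      rcases eq_or_lt_of_le ht₁ with h0 | h0
      · -- t₁ = 0 : z₁ = v ∈ interior T, contradiction with frontier
        have : z₁ = v := by rw [hz₁, ← h0]; simp
        exact hf₁.2 (this ▸ hv)
      · -- 0 < t₁ < t₂ : z₁ ∈ openSegment v z₂ ⊆ interior T
        have hr0 : 0 < t₁ / t₂ := div_pos h0 ht₂pos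
        have hr1 : t₁ / t₂ < 1 := (div_lt_one ht₂pos).2 hlt
        have hmem : z₁ ∈ openSegment ℝ v z₂ := by
          refine ⟨1 - t₁ / t₂, t₁ / t₂, by linarith, hr0, by ring, ?_⟩
          rw [hz₁, hz₂]
          have ht₂ne : t₂ ≠ 0 := ne_of_gt ht₂pos
          match_scalars <;> field_simp <;> ring
        have : z₁ ∈ interior T :=
          hTconv.openSegment_interior_closure_subset_interior hv
            (frontier_subset_closure hf₂) hmem
        exact hf₁.2 this
    intro z₁ z₂ hs₁ hf₁ hs₂ hf₂
    obtain ⟨s₁, t₁, hs1, ht1, hst1, he1⟩ := hs₁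
    obtain ⟨s₂, t₂, hs2, ht2, hst2, he2⟩ := hs₂
    have he1' : z₁ = (1 - t₁) • v + t₁ • w := by
      rw [← he1]; congr 1; · congr 1; linarith
    have he2' : z₂ = (1 - t₂) • v + t₂ • w := by
      rw [← he2]; congr 1; · congr 1; linarith
    rcases lt_trichotomy t₁ t₂ with hlt | heq | hlt
    · exact absurd (main z₁ z₂ t₁ t₂ ht1 ht2 hlt he1' he2' hf₁ hf₂) (by simp)
    · rw [he1', he2', heq]
    · exact absurd (main z₂ z₁ t₂ t₁ ht2 ht1 hlt he2' he1' hf₂ hf₁) (by simp)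
  -- existence
  have hex : ∃ z, z ∈ segment ℝ v w ∧ z ∈ frontier T := by
    by_contra hne
    push_neg at hne
    have hconn : IsPreconnected (segment ℝ v w) := (convex_segment v w).isPreconnected
    have hsub : segment ℝ v w ⊆ interior T ∪ Tᶜ := by
      intro z hz
      by_cases hzT : z ∈ T
      · left
        by_contra hzi
        exact hne z hz ⟨subset_closure hzT, hzi⟩
      · exact Or.inr hzT
    obtain ⟨x, -, hx1, hx2⟩ := hconn (interior T) Tᶜ isOpen_interior
      hTclosed.isOpen_compl hsub ⟨v, left_mem_segment ℝ v w, hv⟩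
      ⟨w, right_mem_segment ℝ v w, hw⟩
    exact hx2 (interior_subset hx1)
  obtain ⟨z, hz⟩ := hex
  exact ⟨z, hz, fun y hy => key y z hy.1 hy.2 hz.1 hz.2⟩
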